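/- arXiv:0910.5502 — 2 statements merged into one kernel-verified Lean document; each statement's English description precedes it below -/
import Mathlib

section
/- For real numbers p_i, p_j, p_k ≥ 0 and x_i, x_j, x_k ≥ 0 with x_i + x_j + x_k ≤ c, if (p_i - P_{-i}) - P_{-i}·(x_i+x_j+x_k-c)/γ = 0 and the two analogous equations hold for j and k (with P_{-i} = (p_j+p_k)/2, P_{-j} = (p_k+p_i)/2, P_{-k} = (p_i+p_j)/2, γ > 0), then p_i = p_j = p_k and p_i·(x_i + x_j + x_k - c) = 0. -/
/-- Three-user link: the first-order conditions on prices at a Nash equilibrium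
imply equal prices and complementary slackness. -/
theorem stmt_1 (pi pj pk xi xj xk c γ : ℝ)
    (hpi : 0 ≤ pi) (hpj : 0 ≤ pj) (hpk : 0 ≤ pk)
    (hxi : 0 ≤ xi) (hxj : 0 ≤ xj) (hxk : 0 ≤ xk)
    (hγ : 0 < γ) (hcap : xi + xj + xk ≤ c)
    (hi : (pi - (pj + pk) / 2) - (pj + pk) / 2 * ((xi + xj + xk - c) / γ) = 0)
    (hj : (pj - (pk + pi) / 2) - (pk + pi) / 2 * ((xi + xj + xk - c) / γ) = 0)
    (hk : (pk - (pi + pj) / 2) - (pi + pj) / 2 * ((xi + xj + xk - c) / γ) = 0) :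
    (pi = pj ∧ pj = pk) ∧ pi * (xi + xj + xk - c) = 0 := by
  set t := (xi + xj + xk - c) / γ with ht
  have hγt : γ * t = xi + xj + xk - c := by rw [ht, mul_div_assoc', mul_div_cancel_left₀ _ hγ.ne']
  clear_value t
  have hsum : (pi + pj + pk) * t = 0 := by linear_combination (-1 : ℝ) * hi - hj - hk
  rcases mul_eq_zero.mp hsum with h | h
  · have h1 : pi = 0 := by linarith
    have h2 : pj = 0 := by linarith
    have h3 : pk = 0 := by linarith
    refine ⟨⟨by rw [h1, h2], by rw [h2, h3]⟩, by rw [h1]; ring⟩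
  · have hz : xi + xj + xk - c = 0 := by
      nlinarith
    rw [h] at hi hj hk
    refine ⟨⟨by linarith, by linarith⟩, by rw [hz]; ring⟩
end

section
/- Let G be a finite set with |G| ≥ 2, let p : G → ℝ with p_i ≥ 0 for all i, define P_{-i} := (∑_{j ≠ i} p_j)/(|G|-1), and let x : G → ℝ with x_i ≥ 0, E_{-i} := ∑_{j≠i} x_j - c, and suppose ∑_{i∈G} x_i ≤ c with γ > 0. If for every i ∈ G, (p_i - P_{-i}) - P_{-i}·(E_{-i} + x_i)/γ = 0, then summing over i gives ∑_{i∈G} P_{-i}·(E_{-i} + x_i) = 0, and consequently P_{-i}·(E_{-i}+x_i) = 0 and p_i = P_{-i} for every i ∈ G. -/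
open Finset

/-- Nash equilibrium price characterization at a link with many users. -/
theorem stmt_2 {ι : Type*} [DecidableEq ι] (G : Finset ι) (hG : 2 ≤ G.card)
    (p x : ι → ℝ) (c γ : ℝ) (hγ : 0 < γ)
    (hp : ∀ i ∈ G, 0 ≤ p i) (hx : ∀ i ∈ G, 0 ≤ x i)
    (hcap : ∑ i ∈ G, x i ≤ c)
    (hfoc : ∀ i ∈ G,
      (p i - (∑ j ∈ G.erase i, p j) / ((G.card : ℝ) - 1)) -
        (∑ j ∈ G.erase i, p j) / ((G.card : ℝ) - 1) *
          (((∑ j ∈ G.erase i, x j) - c + x i) / γ) = 0) :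
    (∑ i ∈ G, (∑ j ∈ G.erase i, p j) / ((G.card : ℝ) - 1) *
        ((∑ j ∈ G.erase i, x j) - c + x i)) = 0 ∧
    (∀ i ∈ G, (∑ j ∈ G.erase i, p j) / ((G.card : ℝ) - 1) *
        ((∑ j ∈ G.erase i, x j) - c + x i) = 0) ∧
    (∀ i ∈ G, p i = (∑ j ∈ G.erase i, p j) / ((G.card : ℝ) - 1)) := by
  set n : ℝ := (G.card : ℝ) with hn
  have hn2 : (2 : ℝ) ≤ n := by rw [hn]; exact_mod_cast hG
  have hn1 : (0 : ℝ) < n - 1 := by linarith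
  have hperase : ∀ i ∈ G, ∑ j ∈ G.erase i, p j = (∑ j ∈ G, p j) - p i := by
    intro i hi; exact Finset.sum_erase_eq_sub hi
  have hxerase : ∀ i ∈ G, (∑ j ∈ G.erase i, x j) - c + x i = (∑ j ∈ G, x j) - c := by
    intro i hi; rw [Finset.sum_erase_eq_sub hi]; ring
  -- P_{-i} is nonneg
  have hPnn : ∀ i ∈ G, 0 ≤ (∑ j ∈ G.erase i, p j) / (n - 1) := by
    intro i hi
    apply div_nonneg _ hn1.le
    exact Finset.sum_nonneg fun j hj => hp j (Finset.mem_of_mem_erase hj)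
  -- each term nonpositive
  have hterm_np : ∀ i ∈ G, (∑ j ∈ G.erase i, p j) / (n - 1) *
      ((∑ j ∈ G.erase i, x j) - c + x i) ≤ 0 := by
    intro i hi
    rw [hxerase i hi]
    exact mul_nonpos_of_nonneg_of_nonpos (hPnn i hi) (by linarith)
  -- sum of (p i - P_{-i}) is zero
  have hsum0 : ∑ i ∈ G, (p i - (∑ j ∈ G.erase i, p j) / (n - 1)) = 0 := by
    have : ∑ i ∈ G, (p i - (∑ j ∈ G.erase i, p j) / (n - 1)) =
        ∑ i ∈ G, (p i - ((∑ j ∈ G, p j) - p i) / (n - 1)) :=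
      Finset.sum_congr rfl fun i hi => by rw [hperase i hi]
    rw [this]
    have hne : n - 1 ≠ 0 := ne_of_gt hn1
    set S := ∑ j ∈ G, p j with hS
    have : ∑ i ∈ G, (p i - (S - p i) / (n - 1)) =
        ∑ i ∈ G, (p i * (n / (n - 1)) - S / (n - 1)) := by
      apply Finset.sum_congr rfl; intro i hi; field_simp; ring
    rw [this, Finset.sum_sub_distrib, ← Finset.sum_mul, Finset.sum_const,
      nsmul_eq_mul, ← hS, ← hn]
    field_simp
    ring
  -- part 1
  have h1 : ∑ i ∈ G, (∑ j ∈ G.erase i, p j) / (n - 1) *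
      ((∑ j ∈ G.erase i, x j) - c + x i) = 0 := by
    have key : ∑ i ∈ G, (∑ j ∈ G.erase i, p j) / (n - 1) *
        (((∑ j ∈ G.erase i, x j) - c + x i) / γ) = 0 := by
      rw [← hsum0]
      apply Finset.sum_congr rfl
      intro i hi
      have := hfoc i hi
      linarith
    have : (∑ i ∈ G, (∑ j ∈ G.erase i, p j) / (n - 1) *
        ((∑ j ∈ G.erase i, x j) - c + x i)) / γ = 0 := by
      rw [← key, Finset.sum_div]
      apply Finset.sum_congr rfl
      intro i hi
      ring
    rcases div_eq_zero_iff.mp this with h | h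
    · exact h
    · exact absurd h (ne_of_gt hγ)
  -- part 2: each term is zero
  have h2 : ∀ i ∈ G, (∑ j ∈ G.erase i, p j) / (n - 1) *
      ((∑ j ∈ G.erase i, x j) - c + x i) = 0 := by
    have := (Finset.sum_eq_zero_iff_of_nonneg (fun i hi => neg_nonneg.mpr (hterm_np i hi))).mp
      (by rw [Finset.sum_neg_distrib, h1, neg_zero])
    intro i hi
    have := this i hi
    linarith
  refine ⟨h1, h2, ?_⟩
  intro i hi
  have hf := hfoc i hi
  have ht := h2 i hi
  have : (∑ j ∈ G.erase i, p j) / (n - 1) *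
      (((∑ j ∈ G.erase i, x j) - c + x i) / γ) = 0 := by
    rw [mul_div_assoc'] at *
    rw [ht, zero_div]
  rw [this] at hf
  linarith
end
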